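/- Let 0 < ε < 1 and let ā = (a_0, …, a_m) and b̄ = (b_0, …, b_m) be finite sequences of nonnegative real numbers with (1-ε/8)·a_i ≤ b_i ≤ (1+ε/8)·a_i for every 0 ≤ i ≤ m. Then every ε-flip chain in ā is an (ε/2)-flip chain in b̄; consequently, the ε-flip number of ā is at most the (ε/2)-flip number of b̄. -/

import Mathlib

/-- Comparison principle for flip numbers (used in Proposition 6.2): if the nonnegative
sequences `a` and `b` satisfy `(1 - ε/8)·a i ≤ b i ≤ (1 + ε/8)·a i` for all `i ≤ m`, then every
`ε`-flip chain in `a` is an `(ε/2)`-flip chain in `b`; consequently,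
`λ_ε(a) ≤ λ_{ε/2}(b)`. -/
theorem stmt_11 (m : ℕ) (ε : ℝ) (a b : ℕ → ℝ)
    (hε0 : 0 < ε) (hε1 : ε < 1)
    (ha : ∀ i ≤ m, 0 ≤ a i) (hb : ∀ i ≤ m, 0 ≤ b i)
    (hab : ∀ i ≤ m, (1 - ε / 8) * a i ≤ b i ∧ b i ≤ (1 + ε / 8) * a i) :
    ∀ l : List ℕ, l.Chain' (· < ·) → (∀ x ∈ l, x ≤ m) →
      l.Chain' (fun i j => ¬((1 - ε) * a j ≤ a i ∧ a i ≤ (1 + ε) * a j)) →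
      l.Chain' (fun i j => ¬((1 - ε / 2) * b j ≤ b i ∧ b i ≤ (1 + ε / 2) * b j)) := by
  intro l
  induction l with
  | nil => intro _ _ _; simp [List.Chain']
  | cons x xs ih =>
    cases xs with
    | nil => intro _ _ _; simp [List.Chain']
    | cons y ys =>
      intro hlt hmem hchain
      simp only [List.Chain', List.isChain_cons_cons] at hchain ⊢
      refine ⟨?_, ih hlt.tail (fun z hz => hmem z (List.mem_cons_of_mem _ hz)) hchain.2⟩
      have hx : x ≤ m := hmem x (by simp)
      have hy : y ≤ m := hmem y (by simp)
      rintro ⟨h1, h2⟩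
      apply hchain.1
      have hax := ha x hx
      have hay := ha y hy
      obtain ⟨hbx1, hbx2⟩ := hab x hx
      obtain ⟨hby1, hby2⟩ := hab y hy
      constructor
      · nlinarith
      · nlinarith
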